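/- Let (x₁,x₂,x₃) be an admissible triple of real numbers whose orbit under the group generated by β₁ and β₂ is finite, and suppose x₁² + x₂² + x₃² − x₁x₂x₃ ≠ 4. Then x₁² + x₂² + x₃² − x₁x₂x₃ < 4, |xᵢ| < 2 for i = 1,2,3, and the symmetric matrix g = [[2,x₁,x₃],[x₁,2,x₂],[x₃,x₂,2]] is positive definite. -/

import Mathlib

/-- The braid-group generator `β₁`, as a bijection of `ℝ³`. -/
def braidEquiv₁ : Equiv.Perm (ℝ × ℝ × ℝ) where
  toFun p := (-p.1, p.2.2 - p.1 * p.2.1, p.2.1)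
  invFun p := (-p.1, p.2.2, p.2.1 - p.1 * p.2.2)
  left_inv := by rintro ⟨a, b, c⟩; ext <;> simp <;> ring
  right_inv := by rintro ⟨a, b, c⟩; ext <;> simp <;> ring

/-- The braid-group generator `β₂`, as a bijection of `ℝ³`. -/
def braidEquiv₂ : Equiv.Perm (ℝ × ℝ × ℝ) where
  toFun p := (p.2.2, -p.2.1, p.1 - p.2.1 * p.2.2)
  invFun p := (p.2.2 - p.1 * p.2.1, -p.2.1, p.1)
  left_inv := by rintro ⟨a, b, c⟩; ext <;> simp <;> ring
  right_inv := by rintro ⟨a, b, c⟩; ext <;> simp <;> ring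

/-- The braid group: the group of bijections of `ℝ³` generated by `β₁` and `β₂`. -/
def braidSubgroup : Subgroup (Equiv.Perm (ℝ × ℝ × ℝ)) :=
  Subgroup.closure {braidEquiv₁, braidEquiv₂}

/-- A triple is admissible if at most one of its coordinates equals zero. -/
def Admissible (p : ℝ × ℝ × ℝ) : Prop :=
  ¬(p.1 = 0 ∧ p.2.1 = 0) ∧ ¬(p.1 = 0 ∧ p.2.2 = 0) ∧ ¬(p.2.1 = 0 ∧ p.2.2 = 0)

/-- An admissible triple is good if every braid image of it has all coordinates of the
form `-2 cos (π r)` with `r ∈ [0,1]` rational. -/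
def Good (p : ℝ × ℝ × ℝ) : Prop :=
  Admissible p ∧ ∀ g ∈ braidSubgroup, ∃ r₁ r₂ r₃ : ℚ,
    0 ≤ r₁ ∧ r₁ ≤ 1 ∧ 0 ≤ r₂ ∧ r₂ ≤ 1 ∧ 0 ≤ r₃ ∧ r₃ ≤ 1 ∧
    g p = (-2 * Real.cos (Real.pi * r₁), -2 * Real.cos (Real.pi * r₂),
           -2 * Real.cos (Real.pi * r₃))

/-- Two triples are equivalent when one is obtained from the other by changing the signs
of exactly two of the three coordinates (or by changing no signs). -/
def TripleEquiv (p q : ℝ × ℝ × ℝ) : Prop :=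
  q = p ∨ q = (p.1, -p.2.1, -p.2.2) ∨ q = (-p.1, p.2.1, -p.2.2) ∨ q = (-p.1, -p.2.1, p.2.2)

/-! ### Auxiliary material -/

section Aux

/-- A periodic real sequence attains a bound at a positive index. -/
theorem per_bound (w : ℕ → ℝ) (k : ℕ) (hk : 0 < k) (hper : ∀ n, w (n + k) = w n) :
    ∃ N, 0 < N ∧ ∀ n, w n ≤ w N := by
  have hmul : ∀ m n, w (n + m * k) = w n := by
    intro m
    induction m with
    | zero => simp
    | succ m ih =>
      intro n
      have h : n + (m+1) * k = (n + m*k) + k := by ring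
      rw [h, hper, ih]
  have hmod : ∀ n, w n = w (n % k) := by
    intro n
    conv_lhs => rw [← Nat.mod_add_div' n k]
    exact hmul (n / k) (n % k)
  obtain ⟨n₀, hn₀, hmax⟩ := Finset.exists_max_image (Finset.range k) w ⟨0, Finset.mem_range.2 hk⟩
  refine ⟨n₀ + k, by omega, fun n => ?_⟩
  have h1 : w (n₀ + k) = w n₀ := hper n₀
  rw [hmod n, h1]
  exact hmax _ (Finset.mem_range.2 (Nat.mod_lt _ hk))

/-- A periodic solution of `w (n+2) + w n = s * w (n+1)` with `s > 2` vanishes. -/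
theorem per_rec_zero (s : ℝ) (hs : 2 < s) (w : ℕ → ℝ) (k : ℕ) (hk : 0 < k)
    (hper : ∀ n, w (n + k) = w n) (hrec : ∀ n, w (n + 2) + w n = s * w (n + 1)) :
    ∀ n, w n = 0 := by
  have bound : ∀ (v : ℕ → ℝ), (∀ n, v (n + k) = v n) → (∀ n, v (n + 2) + v n = s * v (n + 1)) →
      ∀ n, v n ≤ 0 := by
    intro v hvper hvrec n
    obtain ⟨N, hN, hmax⟩ := per_bound v k hk hvper
    obtain ⟨M, rfl⟩ : ∃ M, N = M + 1 := ⟨N - 1, by omega⟩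
    have h := hvrec M
    have h1 : v (M + 2) ≤ v (M + 1) := hmax _
    have h2 : v M ≤ v (M + 1) := hmax _
    have hM : v (M + 1) ≤ 0 := by nlinarith
    exact le_trans (hmax n) hM
  intro n
  have h1 := bound w hper hrec n
  have h2 := bound (fun n => -(w n)) (by intro m; simp [hper m]) (by intro m; simp; linarith [hrec m]) n
  simp at h2
  linarith

/-- A periodic solution of `w (n+2) + w n = 2 * w (n+1)` is constant. -/
theorem per_rec_const (w : ℕ → ℝ) (k : ℕ) (hk : 0 < k)
    (hper : ∀ n, w (n + k) = w n) (hrec : ∀ n, w (n + 2) + w n = 2 * w (n + 1)) :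
    w 1 = w 0 := by
  set d := w 1 - w 0 with hd
  have hstep : ∀ n, w (n + 1) = w n + d := by
    intro n
    induction n with
    | zero => simp [hd]
    | succ m ih => have := hrec m; linarith
  have hlin : ∀ n, w n = w 0 + n * d := by
    intro n
    induction n with
    | zero => simp
    | succ m ih => rw [hstep m, ih]; push_cast; ring
  have hk' : w k = w 0 := by have := hper 0; rwa [Nat.zero_add] at this
  have h0 : (k : ℝ) * d = 0 := by have := hlin k; rw [hk'] at this; linarith
  have hkne : (k : ℝ) ≠ 0 := Nat.cast_ne_zero.2 (by omega)
  have : d = 0 := by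
    rcases mul_eq_zero.1 h0 with h | h
    · exact absurd h hkne
    · exact h
  linarith [hd ▸ this]

/-- Core dichotomy for the linearized braid dynamics on a fixed-trace slice. -/
theorem seq_core (c : ℝ) (hc : 4 ≤ c^2) (a b : ℕ → ℝ) (j : ℕ) (hj : 0 < j)
    (ha : ∀ n, a (n+1) = (1 - c^2) * a n + c * b n)
    (hb : ∀ n, b (n+1) = b n - c * a n)
    (hpa : ∀ n, a (n + j) = a n) (hpb : ∀ n, b (n + j) = b n) :
    (a 0 = 0 ∧ b 0 = 0) ∨ (c^2 = 4 ∧ 2 * a 0 = c * b 0 ∧ 2 * b 0 = c * a 0) := by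
  have rec2a : ∀ n, a (n+2) = (2 - c^2) * a (n+1) - a n := by
    intro n
    have h1 := ha (n+1)
    have h2 := ha n
    have h3 := hb n
    rw [show n+1+1 = n+2 from rfl] at h1
    rw [h1, h2, h3]; ring
  have rec2b : ∀ n, b (n+2) = (2 - c^2) * b (n+1) - b n := by
    intro n
    have h1 := hb (n+1)
    have h2 := ha n
    have h3 := hb n
    rw [show n+1+1 = n+2 from rfl] at h1
    rw [h1, h2, h3]; ring
  have neg_pow2 : ∀ n : ℕ, ((-1:ℝ))^(n+2) = (-1)^n := by
    intro n; rw [pow_add]; norm_num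
  have neg_pow1 : ∀ n : ℕ, ((-1:ℝ))^(n+1) = -(-1)^n := by
    intro n; rw [pow_add]; norm_num
  have neg_pow2j : ((-1:ℝ))^(2*j) = 1 := by rw [pow_mul]; norm_num
  have mkrec : ∀ (u : ℕ → ℝ), (∀ n, u (n+2) = (2 - c^2) * u (n+1) - u n) → (∀ n, u (n + j) = u n) →
      (∀ n, (fun n => (-1:ℝ)^n * u n) (n+2) + (fun n => (-1:ℝ)^n * u n) n
          = (c^2 - 2) * (fun n => (-1:ℝ)^n * u n) (n+1)) ∧
      (∀ n, (fun n => (-1:ℝ)^n * u n) (n + 2*j) = (fun n => (-1:ℝ)^n * u n) n) := by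
    intro u hrec hper
    constructor
    · intro n
      simp only
      rw [neg_pow2, neg_pow1, hrec n]; ring
    · intro n
      simp only
      have hu : u (n + 2*j) = u n := by
        have h : n + 2*j = (n + j) + j := by ring
        rw [h, hper, hper]
      rw [pow_add, neg_pow2j, hu]; ring
  obtain ⟨reca, pera⟩ := mkrec a rec2a hpa
  obtain ⟨recb, perb⟩ := mkrec b rec2b hpb
  simp only at reca pera recb perb
  rcases eq_or_lt_of_le hc with h4 | h4
  · right
    refine ⟨h4.symm, ?_, ?_⟩
    · have hw := per_rec_const (fun n => (-1:ℝ)^n * a n) (2*j) (by omega) pera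
        (by intro n; have := reca n; rw [← h4] at this; norm_num at this; simpa using this)
      simp only [pow_one, pow_zero] at hw
      have := ha 0
      rw [← h4] at this
      nlinarith [hw, this]
    · have hw := per_rec_const (fun n => (-1:ℝ)^n * b n) (2*j) (by omega) perb
        (by intro n; have := recb n; rw [← h4] at this; norm_num at this; simpa using this)
      simp only [pow_one, pow_zero] at hw
      have := hb 0
      nlinarith [hw, this]
  · left
    have hs : 2 < c^2 - 2 := by linarith
    constructor
    · have := per_rec_zero _ hs (fun n => (-1:ℝ)^n * a n) (2*j) (by omega) pera reca 0
      simpa using this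
    · have := per_rec_zero _ hs (fun n => (-1:ℝ)^n * b n) (2*j) (by omega) perb recb 0
      simpa using this

/-- The main chord inequality, in the sorted case. -/
theorem helperOrd (u v w : ℝ) (hu : 0 < u) (huv : u ≤ v) (hvw : v ≤ w) (hw : w < 2)
    (c1 : v * w ≤ 2 * u) : u^2 + v^2 + w^2 - u*v*w ≤ 4 := by
  have hv2 : 0 < v := lt_of_lt_of_le hu huv
  have hw2 : 0 < w := lt_of_lt_of_le hv2 hvw
  have e1 : v^2 + w^2 - (v*w)^2/4 ≤ 4 := by
    nlinarith [mul_nonneg (sub_nonneg.2 hw.le) (sub_nonneg.2 (lt_of_le_of_lt hvw hw).le),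
      sq_nonneg (4 - v^2),
      mul_nonneg (sub_nonneg.2 (by nlinarith : v^2 ≤ 4)) (sub_nonneg.2 (by nlinarith : w^2 ≤ 4))]
  have e2 : 2*v^2 + w^2 - v^2*w ≤ 4 := by
    nlinarith [mul_nonneg (sub_nonneg.2 hw.le) (sub_nonneg.2 (by nlinarith : v^2 ≤ 2 + w))]
  have chord : (v - v*w/2) * (u^2 + v^2 + w^2 - u*v*w)
      ≤ (v - u) * (v^2 + w^2 - (v*w)^2/4) + (u - v*w/2) * (2*v^2 + w^2 - v^2*w) := by
    nlinarith [mul_nonneg (sub_nonneg.2 huv) (sub_nonneg.2 (by linarith : v*w/2 ≤ u))]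
  have hpos : 0 < v - v*w/2 := by nlinarith
  have h1 : (v - u) * (v^2 + w^2 - (v*w)^2/4) ≤ (v - u) * 4 :=
    mul_le_mul_of_nonneg_left e1 (by linarith)
  have h2 : (u - v*w/2) * (2*v^2 + w^2 - v^2*w) ≤ (u - v*w/2) * 4 :=
    mul_le_mul_of_nonneg_left e2 (by linarith)
  have h3 : (v - v*w/2) * (u^2 + v^2 + w^2 - u*v*w) ≤ (v - v*w/2) * 4 := by linarith
  exact le_of_mul_le_mul_left h3 hpos

/-- The key inequality at a sum-of-squares maximizer of a finite orbit. -/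
theorem keyIneq (x y z : ℝ) (hx : x^2 < 4) (hy : y^2 < 4) (hz : z^2 < 4)
    (hx0 : x ≠ 0) (hy0 : y ≠ 0)
    (h1 : x^2*y^2 ≤ 2*(x*y*z)) (h2 : y^2*z^2 ≤ 2*(x*y*z)) (h3 : x^2*z^2 ≤ 2*(x*y*z)) :
    x^2 + y^2 + z^2 - x*y*z ≤ 4 := by
  have hP : 0 < x*y*z := by
    have : 0 < x^2*y^2 := by positivity
    linarith
  have hz0 : z ≠ 0 := by rintro rfl; simp at hP
  set u := |x| with hud
  set v := |y| with hvd
  set w := |z| with hwd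
  have hu0 : 0 < u := abs_pos.2 hx0
  have hv0 : 0 < v := abs_pos.2 hy0
  have hw0 : 0 < w := abs_pos.2 hz0
  have huvw : u*v*w = x*y*z := by rw [hud, hvd, hwd, ← abs_mul, ← abs_mul]; exact abs_of_pos hP
  have hu2 : u^2 = x^2 := sq_abs x
  have hv2 : v^2 = y^2 := sq_abs y
  have hw2 : w^2 = z^2 := sq_abs z
  have hu4 : u < 2 := by nlinarith
  have hv4 : v < 2 := by nlinarith
  have hw4 : w < 2 := by nlinarith
  have c3 : u*v ≤ 2*w := by
    have h : u^2*v^2 ≤ 2*(u*v*w) := by rw [hu2, hv2, huvw]; exact h1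
    nlinarith [mul_pos hu0 hv0]
  have c1 : v*w ≤ 2*u := by
    have h : v^2*w^2 ≤ 2*(u*v*w) := by rw [hv2, hw2, huvw]; exact h2
    nlinarith [mul_pos hv0 hw0]
  have c2 : u*w ≤ 2*v := by
    have h : u^2*w^2 ≤ 2*(u*v*w) := by rw [hu2, hw2, huvw]; exact h3
    nlinarith [mul_pos hu0 hw0]
  have goal' : u^2 + v^2 + w^2 - u*v*w ≤ 4 := by
    rcases le_total u v with huv | hvu
    · rcases le_total v w with hvw | hwv
      · exact helperOrd u v w hu0 huv hvw hw4 c1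
      · rcases le_total u w with huw | hwu
        · have t := helperOrd u w v hu0 huw hwv hv4 (by rwa [mul_comm])
          calc u^2+v^2+w^2 - u*v*w = u^2+w^2+v^2 - u*w*v := by ring
            _ ≤ 4 := t
        · have t := helperOrd w u v hw0 hwu huv hv4 c3
          calc u^2+v^2+w^2 - u*v*w = w^2+u^2+v^2 - w*u*v := by ring
            _ ≤ 4 := t
    · rcases le_total u w with huw | hwu
      · have t := helperOrd v u w hv0 hvu huw hw4 c2
        calc u^2+v^2+w^2 - u*v*w = v^2+u^2+w^2 - v*u*w := by ring
          _ ≤ 4 := t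
      · rcases le_total v w with hvw | hwv
        · have t := helperOrd v w u hv0 hvw hwu hu4 (by rwa [mul_comm])
          calc u^2+v^2+w^2 - u*v*w = v^2+w^2+u^2 - v*w*u := by ring
            _ ≤ 4 := t
        · have t := helperOrd w v u hw0 hwv hvu hu4 (by rwa [mul_comm])
          calc u^2+v^2+w^2 - u*v*w = w^2+v^2+u^2 - w*v*u := by ring
            _ ≤ 4 := t
  calc x^2+y^2+z^2 - x*y*z = u^2+v^2+w^2 - u*v*w := by rw [hu2, hv2, hw2, huvw]
    _ ≤ 4 := goal'

lemma b1_apply (x : ℝ × ℝ × ℝ) : braidEquiv₁ x = (-x.1, x.2.2 - x.1 * x.2.1, x.2.1) := rfl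

lemma b2_apply (x : ℝ × ℝ × ℝ) : braidEquiv₂ x = (x.2.2, -x.2.1, x.1 - x.2.1 * x.2.2) := rfl

lemma b2inv_apply (x : ℝ × ℝ × ℝ) : braidEquiv₂⁻¹ x = (x.2.2 - x.1 * x.2.1, -x.2.1, x.1) := rfl

lemma b1_mem : braidEquiv₁ ∈ braidSubgroup := Subgroup.subset_closure (Set.mem_insert _ _)

lemma b2_mem : braidEquiv₂ ∈ braidSubgroup :=
  Subgroup.subset_closure (Set.mem_insert_of_mem _ rfl)

/-- The Markov-type invariant. -/
def FF (x : ℝ × ℝ × ℝ) : ℝ := x.1^2 + x.2.1^2 + x.2.2^2 - x.1 * x.2.1 * x.2.2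

lemma exists_period {p : ℝ × ℝ × ℝ}
    (hfin : Set.Finite {q : ℝ × ℝ × ℝ | ∃ g ∈ braidSubgroup, g p = q})
    {g : Equiv.Perm (ℝ × ℝ × ℝ)} (hg : g ∈ braidSubgroup) :
    ∃ j, 0 < j ∧ (g ^ j) p = p := by
  have hmaps : Set.MapsTo (fun n : ℕ => (g ^ n) p) Set.univ
      {q : ℝ × ℝ × ℝ | ∃ g ∈ braidSubgroup, g p = q} :=
    fun n _ => ⟨g ^ n, pow_mem hg n, rfl⟩
  obtain ⟨m, -, n, -, hmn, heq⟩ := Set.infinite_univ.exists_ne_map_eq_of_mapsTo hmaps hfin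
  rcases hmn.lt_or_gt with h | h
  · refine ⟨n - m, by omega, ?_⟩
    have h2 : (g ^ (m + (n - m))) p = (g ^ m) p := by
      rw [show m + (n - m) = n by omega]; exact heq.symm
    rw [pow_add, Equiv.Perm.mul_apply] at h2
    exact (g ^ m).injective h2
  · refine ⟨m - n, by omega, ?_⟩
    have h2 : (g ^ (n + (m - n))) p = (g ^ n) p := by
      rw [show n + (m - n) = m by omega]; exact heq
    rw [pow_add, Equiv.Perm.mul_apply] at h2
    exact (g ^ n).injective h2

/-- Each braid-group element preserves admissibility and the invariant `FF`. -/
lemma braid_inv {g : Equiv.Perm (ℝ × ℝ × ℝ)} (hg : g ∈ braidSubgroup) :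
    ∀ x : ℝ × ℝ × ℝ, (Admissible x ↔ Admissible (g x)) ∧ FF (g x) = FF x := by
  refine Subgroup.closure_induction (fun y hy => ?_) (fun x => ?_) (fun y z _ _ hy hz x => ?_)
    (fun y _ hy x => ?_) hg
  · rcases hy with rfl | rfl
    · intro x
      constructor
      · rw [b1_apply]
        unfold Admissible
        simp only
        constructor
        · rintro ⟨h1, h2, h3⟩
          refine ⟨?_, ?_, ?_⟩
          · rintro ⟨e1, e2⟩
            have hx1 : x.1 = 0 := by linarith [neg_eq_zero.mp e1]
            have hx3 : x.2.2 = 0 := by linear_combination e2 + x.2.1 * hx1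
            exact h2 ⟨hx1, hx3⟩
          · rintro ⟨e1, e2⟩
            exact h1 ⟨neg_eq_zero.mp e1, e2⟩
          · rintro ⟨e1, e2⟩
            have hx3 : x.2.2 = 0 := by linear_combination e1 + x.1 * e2
            exact h3 ⟨e2, hx3⟩
        · rintro ⟨h1, h2, h3⟩
          refine ⟨?_, ?_, ?_⟩
          · rintro ⟨e1, e2⟩
            exact h2 ⟨by rw [e1, neg_zero], e2⟩
          · rintro ⟨e1, e2⟩
            exact h1 ⟨by rw [e1, neg_zero], by linear_combination e2 - x.2.1 * e1⟩
          · rintro ⟨e1, e2⟩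
            exact h3 ⟨by linear_combination e2 - x.1 * e1, e1⟩
      · rw [b1_apply]; unfold FF; simp only; ring
    · intro x
      constructor
      · rw [b2_apply]
        unfold Admissible
        simp only
        constructor
        · rintro ⟨h1, h2, h3⟩
          refine ⟨?_, ?_, ?_⟩
          · rintro ⟨e1, e2⟩
            exact h3 ⟨neg_eq_zero.mp e2, e1⟩
          · rintro ⟨e1, e2⟩
            have hx1 : x.1 = 0 := by linear_combination e2 + x.2.1 * e1
            exact h2 ⟨hx1, e1⟩
          · rintro ⟨e1, e2⟩
            have hx2 : x.2.1 = 0 := neg_eq_zero.mp e1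
            have hx1 : x.1 = 0 := by linear_combination e2 + x.2.2 * hx2
            exact h1 ⟨hx1, hx2⟩
        · rintro ⟨h1, h2, h3⟩
          refine ⟨?_, ?_, ?_⟩
          · rintro ⟨e1, e2⟩
            exact h3 ⟨by rw [e2, neg_zero], by linear_combination e1 - x.2.2 * e2⟩
          · rintro ⟨e1, e2⟩
            exact h2 ⟨e2, by linear_combination e1 - x.2.1 * e2⟩
          · rintro ⟨e1, e2⟩
            exact h1 ⟨e2, by rw [e1, neg_zero]⟩
      · rw [b2_apply]; unfold FF; simp only; ring
  · simp [Equiv.Perm.one_apply]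
  · rw [Equiv.Perm.mul_apply]
    exact ⟨(hz x).1.trans (hy (z x)).1, (hy (z x)).2.trans (hz x).2⟩
  · have h := hy (y⁻¹ x)
    rw [show y (y⁻¹ x) = x from y.apply_symm_apply x] at h
    exact ⟨h.1.symm, h.2.symm ▸ rfl⟩

/-- The dichotomy produced by iterating a braid element which fixes one coordinate
and acts linearly on the remaining two. -/
lemma gamma_block (p : ℝ × ℝ × ℝ)
    (hfin : Set.Finite {q : ℝ × ℝ × ℝ | ∃ g ∈ braidSubgroup, g p = q})
    {γ : Equiv.Perm (ℝ × ℝ × ℝ)} (hγ : γ ∈ braidSubgroup)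
    (sel A B : ℝ × ℝ × ℝ → ℝ) (hc : 4 ≤ (sel p)^2)
    (hstep : ∀ x : ℝ × ℝ × ℝ, sel x = sel p →
      sel (γ x) = sel p ∧ A (γ x) = (1 - (sel p)^2) * A x + (sel p) * B x ∧
      B (γ x) = B x - (sel p) * A x) :
    (A p = 0 ∧ B p = 0) ∨
      ((sel p)^2 = 4 ∧ 2 * A p = sel p * B p ∧ 2 * B p = sel p * A p) := by
  obtain ⟨j, hj, hper⟩ := exists_period hfin hγ
  have hq0 : (γ ^ 0) p = p := by rw [pow_zero]; rfl
  have hqs : ∀ n, (γ ^ (n+1)) p = γ ((γ ^ n) p) := by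
    intro n; rw [pow_succ', Equiv.Perm.mul_apply]
  have hsel : ∀ n, sel ((γ ^ n) p) = sel p := by
    intro n; induction n with
    | zero => rw [hq0]
    | succ m ih => rw [hqs]; exact (hstep _ ih).1
  have ha : ∀ n, A ((γ ^ (n+1)) p) = (1 - (sel p)^2) * A ((γ^n) p) + (sel p) * B ((γ^n) p) := by
    intro n; rw [hqs]; exact (hstep _ (hsel n)).2.1
  have hb : ∀ n, B ((γ ^ (n+1)) p) = B ((γ^n) p) - (sel p) * A ((γ^n) p) := by
    intro n; rw [hqs]; exact (hstep _ (hsel n)).2.2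
  have hqper : ∀ n, (γ ^ (n + j)) p = (γ ^ n) p := by
    intro n; rw [pow_add, Equiv.Perm.mul_apply, hper]
  have hmain := seq_core (sel p) hc (fun n => A ((γ^n) p)) (fun n => B ((γ^n) p)) j hj
    ha hb (fun n => by rw [hqper]) (fun n => by rw [hqper])
  simp only [hq0] at hmain
  exact hmain

/-- Step A: all coordinate squares are `< 4`. -/
lemma sqlt (p : ℝ × ℝ × ℝ) (hadm : Admissible p)
    (hfin : Set.Finite {q : ℝ × ℝ × ℝ | ∃ g ∈ braidSubgroup, g p = q})
    (hne : FF p ≠ 4) : p.1^2 < 4 ∧ p.2.1^2 < 4 ∧ p.2.2^2 < 4 := by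
  refine ⟨?_, ?_, ?_⟩
  · by_contra hcon
    push_neg at hcon
    have hmem : braidEquiv₁ * braidEquiv₁ ∈ braidSubgroup := mul_mem b1_mem b1_mem
    have happ : ∀ x : ℝ × ℝ × ℝ, (braidEquiv₁ * braidEquiv₁) x
        = (x.1, x.2.1 + x.1*x.2.2 - x.1^2*x.2.1, x.2.2 - x.1*x.2.1) := by
      intro x
      rw [Equiv.Perm.mul_apply, b1_apply, b1_apply]
      simp only [Prod.mk.injEq]
      exact ⟨by ring, by ring, trivial⟩
    have hres := gamma_block p hfin hmem (fun x => x.1) (fun x => x.2.1) (fun x => x.2.2) hcon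
      (by
        intro x hx
        simp only [happ]
        have hx' : x.1 = p.1 := hx
        exact ⟨hx, by rw [hx']; try ring, by rw [hx']; try ring⟩)
    rcases hres with ⟨h1, h2⟩ | ⟨h4, e1, e2⟩
    · exact hadm.2.2 ⟨h1, h2⟩
    · refine hne ?_
      show p.1^2 + p.2.1^2 + p.2.2^2 - p.1 * p.2.1 * p.2.2 = 4
      have h4' : p.1^2 = 4 := h4
      have e1' : 2 * p.2.1 = p.1 * p.2.2 := e1
      have e2' : 2 * p.2.2 = p.1 * p.2.1 := e2
      linear_combination h4' + (p.2.1/2) * e1' + (p.2.2/2) * e2'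
  · by_contra hcon
    push_neg at hcon
    have hmem : braidEquiv₂ * braidEquiv₂ ∈ braidSubgroup := mul_mem b2_mem b2_mem
    have happ : ∀ x : ℝ × ℝ × ℝ, (braidEquiv₂ * braidEquiv₂) x
        = (x.1 - x.2.1*x.2.2, x.2.1, x.2.2 + x.2.1*x.1 - x.2.1^2*x.2.2) := by
      intro x
      rw [Equiv.Perm.mul_apply, b2_apply, b2_apply]
      simp only [Prod.mk.injEq]
      exact ⟨trivial, by ring, by ring⟩
    have hres := gamma_block p hfin hmem (fun x => x.2.1) (fun x => x.2.2) (fun x => x.1) hcon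
      (by
        intro x hx
        simp only [happ]
        have hx' : x.2.1 = p.2.1 := hx
        exact ⟨hx, by rw [hx']; try ring, by rw [hx']; try ring⟩)
    rcases hres with ⟨h1, h2⟩ | ⟨h4, e1, e2⟩
    · exact hadm.2.1 ⟨h2, h1⟩
    · refine hne ?_
      show p.1^2 + p.2.1^2 + p.2.2^2 - p.1 * p.2.1 * p.2.2 = 4
      have h4' : p.2.1^2 = 4 := h4
      have e1' : 2 * p.2.2 = p.2.1 * p.1 := e1
      have e2' : 2 * p.1 = p.2.1 * p.2.2 := e2
      linear_combination h4' + (p.2.2/2) * e1' + (p.1/2) * e2'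
  · by_contra hcon
    push_neg at hcon
    have hmem : braidEquiv₂⁻¹ * (braidEquiv₁ * braidEquiv₁) * braidEquiv₂ ∈ braidSubgroup :=
      mul_mem (mul_mem (inv_mem b2_mem) (mul_mem b1_mem b1_mem)) b2_mem
    have happ : ∀ x : ℝ × ℝ × ℝ, (braidEquiv₂⁻¹ * (braidEquiv₁ * braidEquiv₁) * braidEquiv₂) x
        = (x.1 - x.1*x.2.2^2 + x.2.1*x.2.2, x.2.1 - x.1*x.2.2, x.2.2) := by
      intro x
      simp only [Equiv.Perm.mul_apply, b2_apply, b1_apply, b2inv_apply]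
      simp only [Prod.mk.injEq]
      exact ⟨by ring, by ring, by ring⟩
    have hres := gamma_block p hfin hmem (fun x => x.2.2) (fun x => x.1) (fun x => x.2.1) hcon
      (by
        intro x hx
        simp only [happ]
        have hx' : x.2.2 = p.2.2 := hx
        exact ⟨hx, by rw [hx']; try ring, by rw [hx']; try ring⟩)
    rcases hres with ⟨h1, h2⟩ | ⟨h4, e1, e2⟩
    · exact hadm.1 ⟨h1, h2⟩
    · refine hne ?_
      show p.1^2 + p.2.1^2 + p.2.2^2 - p.1 * p.2.1 * p.2.2 = 4
      have h4' : p.2.2^2 = 4 := h4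
      have e1' : 2 * p.1 = p.2.2 * p.2.1 := e1
      have e2' : 2 * p.2.1 = p.2.2 * p.1 := e2
      linear_combination h4' + (p.1/2) * e1' + (p.2.1/2) * e2'

/-- Step B: the invariant is at most `4`. -/
lemma F_le_four (p : ℝ × ℝ × ℝ) (hadm : Admissible p)
    (hfin : Set.Finite {q : ℝ × ℝ × ℝ | ∃ g ∈ braidSubgroup, g p = q})
    (hne : FF p ≠ 4) : FF p ≤ 4 := by
  set O := {q : ℝ × ℝ × ℝ | ∃ g ∈ braidSubgroup, g p = q} with hO
  have hpO : p ∈ O := ⟨1, one_mem _, Equiv.Perm.one_apply p⟩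
  obtain ⟨q, hqO, hqmax⟩ := Set.Finite.exists_maximalFor
    (fun r : ℝ × ℝ × ℝ => r.1^2 + r.2.1^2 + r.2.2^2) O hfin ⟨p, hpO⟩
  have hmax : ∀ r ∈ O, r.1^2 + r.2.1^2 + r.2.2^2 ≤ q.1^2 + q.2.1^2 + q.2.2^2 := by
    intro r hr
    rcases le_total (r.1^2 + r.2.1^2 + r.2.2^2) (q.1^2 + q.2.1^2 + q.2.2^2) with h | h
    · exact h
    · exact hqmax hr h
  obtain ⟨g, hg, hgp⟩ := hqO
  have hinv := braid_inv hg p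
  have hadmq : Admissible q := hgp ▸ hinv.1.mp hadm
  have hFq : FF q = FF p := by rw [← hgp]; exact hinv.2
  have hsub : {r : ℝ × ℝ × ℝ | ∃ h ∈ braidSubgroup, h q = r} ⊆ O := by
    rintro r ⟨h, hh, rfl⟩
    exact ⟨h * g, mul_mem hh hg, by rw [Equiv.Perm.mul_apply, hgp]⟩
  have hfinq := hfin.subset hsub
  have hneq : FF q ≠ 4 := by rw [hFq]; exact hne
  obtain ⟨s1, s2, s3⟩ := sqlt q hadmq hfinq hneq
  have mem1 : braidEquiv₁ q ∈ O :=
    ⟨braidEquiv₁ * g, mul_mem b1_mem hg, by rw [Equiv.Perm.mul_apply, hgp]⟩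
  have mem2 : braidEquiv₂ q ∈ O :=
    ⟨braidEquiv₂ * g, mul_mem b2_mem hg, by rw [Equiv.Perm.mul_apply, hgp]⟩
  have mem3 : (braidEquiv₁ * (braidEquiv₁ * braidEquiv₂)) q ∈ O :=
    ⟨braidEquiv₁ * (braidEquiv₁ * braidEquiv₂) * g,
      mul_mem (mul_mem b1_mem (mul_mem b1_mem b2_mem)) hg,
      by rw [Equiv.Perm.mul_apply, hgp]⟩
  have c1 : q.1^2*q.2.1^2 ≤ 2*(q.1*q.2.1*q.2.2) := by
    have t := hmax _ mem1
    rw [b1_apply] at t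
    simp only at t
    nlinarith [t]
  have c2 : q.2.1^2*q.2.2^2 ≤ 2*(q.1*q.2.1*q.2.2) := by
    have t := hmax _ mem2
    rw [b2_apply] at t
    simp only at t
    nlinarith [t]
  have c3 : q.1^2*q.2.2^2 ≤ 2*(q.1*q.2.1*q.2.2) := by
    have t := hmax _ mem3
    rw [Equiv.Perm.mul_apply, Equiv.Perm.mul_apply, b2_apply, b1_apply, b1_apply] at t
    simp only at t
    nlinarith [t]
  have hq1 : q.1 ≠ 0 := by
    intro h0
    have c2' : q.2.1^2 * q.2.2^2 ≤ 0 := by rw [h0] at c2; nlinarith [c2]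
    have h21 : q.2.1^2 * q.2.2^2 = 0 := le_antisymm c2' (by positivity)
    rcases mul_eq_zero.1 h21 with h | h
    · exact hadmq.1 ⟨h0, pow_eq_zero_iff two_ne_zero |>.1 h⟩
    · exact hadmq.2.1 ⟨h0, pow_eq_zero_iff two_ne_zero |>.1 h⟩
  have hq2 : q.2.1 ≠ 0 := by
    intro h0
    have c3' : q.1^2 * q.2.2^2 ≤ 0 := by rw [h0] at c3; nlinarith [c3]
    have h21 : q.1^2 * q.2.2^2 = 0 := le_antisymm c3' (by positivity)
    rcases mul_eq_zero.1 h21 with h | h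
    · exact hadmq.1 ⟨pow_eq_zero_iff two_ne_zero |>.1 h, h0⟩
    · exact hadmq.2.2 ⟨h0, pow_eq_zero_iff two_ne_zero |>.1 h⟩
  have key := keyIneq q.1 q.2.1 q.2.2 s1 s2 s3 hq1 hq2 c1 c2 c3
  calc FF p = FF q := hFq.symm
    _ ≤ 4 := key

end Aux

/-- If an admissible triple has a finite braid-group orbit and
`x₁² + x₂² + x₃² - x₁x₂x₃ ≠ 4`, then `x₁² + x₂² + x₃² - x₁x₂x₃ < 4`, all `|xᵢ| < 2`,
and the Gram matrix `[[2,x₁,x₃],[x₁,2,x₂],[x₃,x₂,2]]` is positive definite. -/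
theorem finite_orbit_gram_posdef (p : ℝ × ℝ × ℝ) (hadm : Admissible p)
    (hfin : Set.Finite {q : ℝ × ℝ × ℝ | ∃ g ∈ braidSubgroup, g p = q})
    (hne : p.1 ^ 2 + p.2.1 ^ 2 + p.2.2 ^ 2 - p.1 * p.2.1 * p.2.2 ≠ 4) :
    p.1 ^ 2 + p.2.1 ^ 2 + p.2.2 ^ 2 - p.1 * p.2.1 * p.2.2 < 4 ∧
    |p.1| < 2 ∧ |p.2.1| < 2 ∧ |p.2.2| < 2 ∧
    (!![2, p.1, p.2.2; p.1, 2, p.2.1; p.2.2, p.2.1, 2] :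
        Matrix (Fin 3) (Fin 3) ℝ).PosDef := by
  have hne' : FF p ≠ 4 := hne
  obtain ⟨s1, s2, s3⟩ := sqlt p hadm hfin hne'
  have hle := F_le_four p hadm hfin hne'
  have hlt : FF p < 4 := lt_of_le_of_ne hle hne'
  have hltx : p.1 ^ 2 + p.2.1 ^ 2 + p.2.2 ^ 2 - p.1 * p.2.1 * p.2.2 < 4 := hlt
  refine ⟨hltx, ?_, ?_, ?_, ?_⟩
  · nlinarith [sq_abs p.1, abs_nonneg p.1]
  · nlinarith [sq_abs p.2.1, abs_nonneg p.2.1]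
  · nlinarith [sq_abs p.2.2, abs_nonneg p.2.2]
  · rw [Matrix.posDef_iff_dotProduct_mulVec]
    constructor
    · ext i j
      fin_cases i <;> fin_cases j <;> simp [Matrix.conjTranspose_apply]
    · intro x hx
      have hx' : x 0 ≠ 0 ∨ x 1 ≠ 0 ∨ x 2 ≠ 0 := by
        by_contra hcon
        push_neg at hcon
        exact hx (funext fun i => by fin_cases i <;> simp [hcon.1, hcon.2.1, hcon.2.2])
      simp only [Matrix.mulVec, dotProduct, Fin.sum_univ_three, star_trivial,
        Matrix.cons_val', Matrix.cons_val_zero, Matrix.cons_val_one, Matrix.head_cons,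
        Matrix.empty_val', Matrix.cons_val_fin_one, Matrix.head_fin_const, Matrix.cons_val_two,
        Matrix.tail_cons, Pi.star_apply, star_trivial, Matrix.of_apply]
      set v0 := x 0
      set v1 := x 1
      set v2 := x 2
      have ha4 : 0 < 4 - p.1^2 := by linarith
      have hF4 : 0 < 4 - (p.1^2 + p.2.1^2 + p.2.2^2 - p.1*p.2.1*p.2.2) := by
        have : FF p = p.1^2 + p.2.1^2 + p.2.2^2 - p.1*p.2.1*p.2.2 := rfl
        linarith [hlt, this ▸ hlt]
      rcases em (v2 = 0) with h2 | h2
      · rcases em (v1 = 0) with h1 | h1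
        · have h0 : v0 ≠ 0 := by
            rcases hx' with h | h | h
            · exact h
            · exact absurd h1 (by simpa using h)
            · exact absurd h2 (by simpa using h)
          rw [h1, h2]
          have hv0 : 0 < v0^2 := by positivity
          nlinarith
        · rw [h2]
          have hv1 : 0 < v1^2 := by positivity
          nlinarith [sq_nonneg (2*v0 + p.1*v1), mul_pos ha4 hv1]
      · have hv2 : 0 < v2^2 := by positivity
        nlinarith [mul_nonneg ha4.le (sq_nonneg (2*v0 + p.1*v1 + p.2.2*v2)),
          sq_nonneg ((4 - p.1^2)*v1 + (2*p.2.1 - p.1*p.2.2)*v2), mul_pos hF4 hv2,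
          mul_pos ha4 (mul_pos hF4 hv2)]
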